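/- Let N = n + d, V = (F_2)^N, n ≥ 2, d ≥ 1, and let T_∘ ⊆ AGL(V,+) be an elementary abelian regular subgroup with U(T_∘) = Span{e_{n+1},…,e_{n+d}}. Then T_+ ⊆ AGL(V,∘) if and only if for every y ∈ V the linear part κ_y of τ_y has block form [[I_n, B_y],[0, I_d]] for some n×d matrix B_y over F_2. -/
import Mathlib

open Matrix

/-- The upper unitriangular block matrix `[[I_n, B],[0, I_d]]` as an `(n+d) × (n+d)` matrix. -/
def blockUT (n d : ℕ) (B : Matrix (Fin n) (Fin d) (ZMod 2)) :
    Matrix (Fin (n + d)) (Fin (n + d)) (ZMod 2) :=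
  (Matrix.fromBlocks 1 B 0 1).submatrix finSumFinEquiv.symm finSumFinEquiv.symm

lemma vecMul_blockUT_castAdd {n d : ℕ} (B : Matrix (Fin n) (Fin d) (ZMod 2))
    (x : Fin (n+d) → ZMod 2) (i : Fin n) :
    (x ᵥ* blockUT n d B) (Fin.castAdd d i) = x (Fin.castAdd d i) := by
  simp [blockUT, Matrix.vecMul, dotProduct, Fin.sum_univ_add, Matrix.one_apply]

lemma vecMul_blockUT_lt {n d : ℕ} (B : Matrix (Fin n) (Fin d) (ZMod 2))
    (x : Fin (n+d) → ZMod 2) (k : Fin (n+d)) (hk : (k : ℕ) < n) :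
    (x ᵥ* blockUT n d B) k = x k := by
  have hke : k = Fin.castAdd d ⟨(k : ℕ), hk⟩ := by
    apply Fin.ext; simp
  rw [hke]; exact vecMul_blockUT_castAdd B x _

lemma vecMul_blockUT_natAdd {n d : ℕ} (B : Matrix (Fin n) (Fin d) (ZMod 2))
    (x : Fin (n+d) → ZMod 2) (j : Fin d) :
    (x ᵥ* blockUT n d B) (Fin.natAdd n j)
      = (∑ i : Fin n, x (Fin.castAdd d i) * B i j) + x (Fin.natAdd n j) := by
  simp [blockUT, Matrix.vecMul, dotProduct, Fin.sum_univ_add, Matrix.one_apply]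

lemma zmod2_cancel (a b : ZMod 2) (h : a + b = 0) : b = a := by
  have h' : ∀ a b : ZMod 2, a + b = 0 → b = a := by decide
  exact h' a b h


lemma single_ne {N : ℕ} {k k' : Fin N} (h : k' ≠ k) :
    (Pi.single k 1 : Fin N → ZMod 2) k' = 0 := Pi.single_eq_of_ne h 1

lemma pi_single_smul' {N : ℕ} (k : Fin N) (r : ZMod 2) :
    (Pi.single k r : Fin N → ZMod 2) = r • (Pi.single k 1 : Fin N → ZMod 2) := by
  funext k'
  by_cases h : k' = k <;> simp [Pi.single_apply, h]

/-- For an elementary abelian regular `T∘ ⊆ AGL(V,+)` with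
`U(T∘) = Span{e_{n+1},…,e_{n+d}}`, one has `T₊ ⊆ AGL(V,∘)` iff every linear part `κ_y`
has block form `[[I_n, B_y],[0, I_d]]`.  (Here `x ∘ a = τ_a x`, maps act on row vectors
on the right, and a permutation is `∘`-affine when it is a `∘`-linear bijection followed
by a `∘`-translation.) -/
theorem stmt3 (n d : ℕ) (hn : 2 ≤ n) (hd : 1 ≤ d)
    (T : Subgroup (Equiv.Perm (Fin (n + d) → ZMod 2)))
    (haff : ∀ g ∈ T, ∃ (L : (Fin (n + d) → ZMod 2) ≃ₗ[ZMod 2] (Fin (n + d) → ZMod 2))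
      (c : Fin (n + d) → ZMod 2), ∀ x, g x = L x + c)
    (hreg : ∀ x y : Fin (n + d) → ZMod 2,
      ∃! g : Equiv.Perm (Fin (n + d) → ZMod 2), g ∈ T ∧ g x = y)
    (hab : ∀ g ∈ T, ∀ h ∈ T, g * h = h * g)
    (helem : ∀ g ∈ T, g * g = 1)
    (τ : (Fin (n + d) → ZMod 2) → Equiv.Perm (Fin (n + d) → ZMod 2))
    (hτmem : ∀ a, τ a ∈ T) (hτ0 : ∀ a, τ a 0 = a)
    (κ : (Fin (n + d) → ZMod 2) →
      ((Fin (n + d) → ZMod 2) ≃ₗ[ZMod 2] (Fin (n + d) → ZMod 2)))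
    (hκ : ∀ y x, τ y x = κ y x + y)
    (hU : ∀ v : Fin (n + d) → ZMod 2,
      (∀ x, τ v x = x + v) ↔ (∀ i : Fin (n + d), (i : ℕ) < n → v i = 0)) :
    ((∀ v : Fin (n + d) → ZMod 2, ∃ L : Equiv.Perm (Fin (n + d) → ZMod 2),
        (∀ a b, L (τ b a) = τ (L b) (L a)) ∧ ∃ c, ∀ x, x + v = τ c (L x))
      ↔ (∀ y : Fin (n + d) → ZMod 2, ∃ B : Matrix (Fin n) (Fin d) (ZMod 2),
          ∀ x, κ y x = x ᵥ* blockUT n d B)) := by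
  have h2 : ∀ a : Fin (n+d) → ZMod 2, a + a = 0 := by
    intro a; funext k
    show a k + a k = 0
    have h : ∀ z : ZMod 2, z + z = 0 := by decide
    exact h (a k)
  have hcan : ∀ x y : Fin (n+d) → ZMod 2, x + y = 0 → x = y := by
    intro x y h; funext k
    exact (zmod2_cancel (x k) (y k) (congrFun h k)).symm
  have hτ00 : τ 0 = 1 := by
    obtain ⟨g, hg, hu⟩ := hreg 0 0
    rw [hu (τ 0) ⟨hτmem 0, hτ0 0⟩, hu 1 ⟨T.one_mem, rfl⟩]
  have hττ : ∀ a b, τ a * τ b = τ (τ a b) := by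
    intro a b
    obtain ⟨g, hg, hu⟩ := hreg 0 (τ a b)
    rw [hu (τ a * τ b) ⟨T.mul_mem (hτmem a) (hτmem b),
        by rw [Equiv.Perm.mul_apply, hτ0]⟩,
      hu (τ (τ a b)) ⟨hτmem _, hτ0 _⟩]
  have hτcomm : ∀ a b, τ a b = τ b a := by
    intro a b
    have h := hab (τ a) (hτmem a) (τ b) (hτmem b)
    calc τ a b = (τ a * τ b) 0 := by rw [Equiv.Perm.mul_apply, hτ0]
      _ = (τ b * τ a) 0 := by rw [h]
      _ = τ b a := by rw [Equiv.Perm.mul_apply, hτ0]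
  have hτaa : ∀ a, τ a a = 0 := by
    intro a
    have h : (τ a * τ a) 0 = (1 : Equiv.Perm (Fin (n+d) → ZMod 2)) 0 := by
      rw [helem (τ a) (hτmem a)]
    rwa [Equiv.Perm.mul_apply, hτ0, Equiv.Perm.one_apply] at h
  have hκ0 : ∀ x, κ 0 x = x := by
    intro x
    have h := hκ 0 x
    rw [hτ00, add_zero, Equiv.Perm.one_apply] at h
    exact h.symm
  have hκa : ∀ a, κ a a = a := by
    intro a
    have h := hκ a a
    rw [hτaa a] at h
    exact hcan _ _ h.symm
  have hκmul : ∀ a b x, κ (τ a b) x = κ a (κ b x) := by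
    intro a b x
    have h : τ a (τ b x) = τ (τ a b) x := by
      rw [← Equiv.Perm.mul_apply, hττ]
    rw [hκ b x, hκ a (κ b x + b), map_add, hκ (τ a b) x] at h
    apply add_right_cancel (b := τ a b)
    rw [← h, hκ a b, add_assoc]
  have hκcomm : ∀ a b x, κ a (κ b x) = κ b (κ a x) := by
    intro a b x
    rw [← hκmul a b x, ← hκmul b a x, hτcomm a b]
  have hκinv : ∀ a x, κ a (κ a x) = x := by
    intro a x
    rw [← hκmul a a x, hτaa a]
    exact hκ0 x
  have hκU : ∀ y u, (∀ i : Fin (n+d), (i : ℕ) < n → u i = 0) → κ y u = u := by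
    intro y u hu
    have h1 : τ u y = y + u := (hU u).mpr hu y
    have h3 : κ y u + y = y + u := by rw [← hκ y u, hτcomm y u, h1]
    apply add_right_cancel (b := y)
    rw [h3]; exact add_comm y u
  have hUid : ∀ u, (∀ i : Fin (n+d), (i : ℕ) < n → u i = 0) → ∀ x, κ u x = x := by
    intro u hu x
    have h1 : τ u x = x + u := (hU u).mpr hu x
    rw [hκ u x] at h1
    exact add_right_cancel h1
  have hκaddu : ∀ b u, (∀ i : Fin (n+d), (i : ℕ) < n → u i = 0) →
      ∀ x, κ (b + u) x = κ b x := by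
    intro b u hu x
    have h1 : τ u b = b + u := (hU u).mpr hu b
    have h3 := hκmul u b x
    rw [h1, hUid u hu (κ b x)] at h3
    exact h3
  constructor
  · -- forward direction
    intro hLHS
    have hlin : ∀ v b a, κ v (κ b a) = κ (κ v b) (κ v a) := by
      intro v b a
      obtain ⟨L, hL1, c, hc⟩ := hLHS v
      have hL0 : L 0 = 0 := by
        have h := hL1 0 0
        rwa [hτ0 0, hτaa (L 0)] at h
      have hcv : c = v := by
        have h := hc 0
        rw [zero_add, hL0, hτ0 c] at h
        exact h.symm
      rw [hcv] at hc
      have hLx : ∀ x, L x = κ v x := by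
        intro x
        have e1 : τ v (τ v (L x)) = L x := by
          rw [← Equiv.Perm.mul_apply, helem (τ v) (hτmem v), Equiv.Perm.one_apply]
        have e2 : τ v (x + v) = κ v x := by
          rw [hκ v (x + v), map_add, hκa v, add_assoc, h2, add_zero]
        rw [← e1, ← hc x]
        exact e2
      have h := hL1 a b
      rw [hLx (τ b a), hLx a, hLx b, hκ b a, map_add, hκ (κ v b) (κ v a)] at h
      exact add_right_cancel h
    have hκfixall : ∀ b a z, κ (κ b a) z = κ a z := by
      intro b a z
      have h := hlin b a (κ b z)
      rw [hκinv b z] at h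
      rw [← h, hκcomm a b z, hκinv b (κ a z)]
    have hF1 : ∀ b a, ∀ i : Fin (n+d), (i : ℕ) < n → (a + κ b a) i = 0 := by
      intro b a
      apply (hU (a + κ b a)).mp
      intro x
      have h : τ (κ b a) (τ a x) = τ (τ (κ b a) a) x := by
        rw [← Equiv.Perm.mul_apply, hττ]
      have haw : τ (κ b a) a = a + κ b a := by
        rw [hκ (κ b a) a, hκfixall b a a, hκa a]
      rw [haw] at h
      rw [← h, hκ a x, hκ (κ b a) (κ a x + a), map_add, hκfixall b a (κ a x),
        hκfixall b a a, hκinv a x, hκa a, add_assoc]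
    intro y
    set B : Matrix (Fin n) (Fin d) (ZMod 2) :=
      fun i j => κ y (Pi.single (Fin.castAdd d i) 1) (Fin.natAdd n j) with hBdef
    refine ⟨B, ?_⟩
    have hbasis : ∀ k : Fin (n+d), κ y (Pi.single k (1 : ZMod 2))
        = (Pi.single k (1 : ZMod 2)) ᵥ* blockUT n d B := by
      intro k
      refine Fin.addCases ?_ ?_ k
      · intro i
        funext k'
        refine Fin.addCases ?_ ?_ k'
        · intro i'
          rw [vecMul_blockUT_castAdd]
          have h0 := hF1 y (Pi.single (Fin.castAdd d i) 1) (Fin.castAdd d i')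
            (by simp)
          exact zmod2_cancel _ _ h0
        · intro j
          rw [vecMul_blockUT_natAdd]
          have hne : Fin.natAdd n j ≠ Fin.castAdd d i := by
            apply Fin.ne_of_val_ne
            have := i.isLt
            simp only [Fin.coe_natAdd, Fin.coe_castAdd]
            omega
          have hsum : (∑ i' : Fin n,
              (Pi.single (Fin.castAdd d i) 1 : Fin (n+d) → ZMod 2) (Fin.castAdd d i') * B i' j) = B i j := by
            rw [Finset.sum_eq_single i]
            · rw [Pi.single_eq_same, one_mul]
            · intro i' _ hne'
              have hne2 : Fin.castAdd d i' ≠ Fin.castAdd d i := by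
                apply Fin.ne_of_val_ne
                simp only [Fin.coe_castAdd]
                exact fun hh => hne' (Fin.ext hh)
              rw [single_ne hne2, zero_mul]
            · intro habs; exact absurd (Finset.mem_univ i) habs
          rw [hsum, single_ne hne, add_zero]
      · intro j
        have hu : ∀ i'' : Fin (n+d), (i'' : ℕ) < n →
            (Pi.single (Fin.natAdd n j) 1 : Fin (n+d) → ZMod 2) i'' = 0 := by
          intro i'' hi''
          apply single_ne
          apply Fin.ne_of_val_ne
          simp only [Fin.coe_natAdd]
          omega
        rw [hκU y _ hu]
        funext k'
        refine Fin.addCases ?_ ?_ k'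
        · intro i'
          rw [vecMul_blockUT_castAdd]
        · intro j'
          rw [vecMul_blockUT_natAdd]
          have hz : (∑ i' : Fin n,
              (Pi.single (Fin.natAdd n j) 1 : Fin (n+d) → ZMod 2) (Fin.castAdd d i') * B i' j') = 0 := by
            apply Finset.sum_eq_zero
            intro i' _
            have hne2 : Fin.castAdd d i' ≠ Fin.natAdd n j := by
              apply Fin.ne_of_val_ne
              have := i'.isLt
              simp only [Fin.coe_natAdd, Fin.coe_castAdd]
              omega
            rw [single_ne hne2, zero_mul]
          rw [hz, zero_add]
    have key : (κ y).toLinearMap = Matrix.vecMulLinear (blockUT n d B) := by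
      apply LinearMap.pi_ext
      intro k r
      rw [pi_single_smul' k r, _root_.map_smul, _root_.map_smul]
      congr 1
      rw [Matrix.vecMulLinear_apply]
      exact hbasis k
    intro x
    have := LinearMap.congr_fun key x
    rw [Matrix.vecMulLinear_apply] at this
    exact this
  · -- converse direction
    intro hRHS v
    obtain ⟨B, hB⟩ := hRHS v
    have hpred : ∀ b, ∀ i : Fin (n+d), (i : ℕ) < n → (κ v b + b) i = 0 := by
      intro b i hi
      show κ v b i + b i = 0
      have h := vecMul_blockUT_lt B b i hi
      rw [← hB b] at h
      rw [h]
      have hz : ∀ z : ZMod 2, z + z = 0 := by decide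
      exact hz (b i)
    have hκvb : ∀ b x, κ (κ v b) x = κ b x := by
      intro b x
      have he : κ v b = b + (κ v b + b) := by
        rw [add_comm (κ v b) b, ← add_assoc, h2, zero_add]
      rw [he, hκaddu b _ (hpred b) x]
    refine ⟨(κ v).toEquiv, ?_, v, ?_⟩
    · intro a b
      simp only [LinearEquiv.coe_toEquiv]
      rw [hκ b a, map_add, hκ (κ v b) (κ v a), hκvb b (κ v a), hκcomm v b a]
    · intro x
      simp only [LinearEquiv.coe_toEquiv]
      rw [hκ v (κ v x), hκinv v x]
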